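/- arXiv:1105.1894 — 2 statements merged into one kernel-verified Lean document; each statement's English description precedes it below -/
import Mathlib

section
/- Let E be a field, n a positive integer, and α ∈ E an element of multiplicative order exactly n. Let f ∈ E[X] and let p be a positive integer with f ∣ X^p − 1 and gcd(p, n) = 1. Then for all integers 0 ≤ i < j < n, the polynomials f(α^i X) and f(α^j X) (obtained from f by substituting α^i·X, respectively α^j·X, for X) are coprime in E[X]. -/
open Polynomial

noncomputable def polySubst {E : Type*} [CommRing E]
    (f : Polynomial E) (γ : E) : Polynomial E :=
  f.comp (Polynomial.C γ * Polynomial.X)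

lemma polySubst_dvd {E : Type*} [CommRing E] {f g : Polynomial E} (γ : E)
    (h : f ∣ g) : polySubst f γ ∣ polySubst g γ := by
  obtain ⟨c, rfl⟩ := h
  exact ⟨polySubst c γ, by simp [polySubst, mul_comp]⟩

lemma coprime_aux {E : Type*} [Field E] {a b : E} (hab : a ≠ b) (p : ℕ) :
    IsCoprime (C a * X ^ p - 1) (C b * X ^ p - 1 : Polynomial E) := by
  refine ⟨C ((a - b)⁻¹ * b), C (-((a - b)⁻¹ * a)), ?_⟩
  have h : a - b ≠ 0 := sub_ne_zero.mpr hab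
  have hC : (C ((a - b)⁻¹) * (C a - C b) : Polynomial E) = 1 := by
    rw [← C_sub, ← C_mul, inv_mul_cancel₀ h, C_1]
  simp only [C_mul, C_neg]
  linear_combination hC

/-- Lemma 2 (Code Length, Period of a Power Series): if `f ∣ X^p − 1` and
`gcd(p, n) = 1`, then the substituted polynomials `f(α^i X)` for distinct
`i < n` are pairwise coprime. -/
theorem substituted_denominators_coprime
    (E : Type*) [Field E]
    (n : ℕ) (hn : 0 < n) (α : E) (hα : orderOf α = n)
    (f : Polynomial E)
    (p : ℕ) (hp : 0 < p) (hfp : f ∣ Polynomial.X ^ p - 1)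
    (hpn : Nat.gcd p n = 1) :
    ∀ i j : ℕ, i < j → j < n →
      IsCoprime (polySubst f (α ^ i)) (polySubst f (α ^ j)) := by
  intro i j hij hjn
  have hαn : α ^ n = 1 := by rw [← hα]; exact pow_orderOf_eq_one α
  have hα0 : α ≠ 0 := by
    intro h; rw [h, zero_pow hn.ne'] at hαn; exact zero_ne_one hαn
  have hsub : ∀ k : ℕ, polySubst (X ^ p - 1 : Polynomial E) (α ^ k)
      = C ((α ^ k) ^ p) * X ^ p - 1 := by
    intro k
    simp only [polySubst, sub_comp, pow_comp, one_comp, X_comp, mul_pow, ← C_pow]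
  have hne : (α ^ i) ^ p ≠ (α ^ j) ^ p := by
    intro h
    have h2 : α ^ (i * p) * α ^ ((j - i) * p) = α ^ (i * p) * 1 := by
      rw [mul_one, ← pow_add, ← Nat.add_mul, Nat.add_sub_cancel' hij.le]
      rw [← pow_mul, ← pow_mul] at h; exact h.symm
    have h3 : α ^ ((j - i) * p) = 1 :=
      mul_left_cancel₀ (pow_ne_zero _ hα0) h2
    have h4 : n ∣ (j - i) * p := hα ▸ orderOf_dvd_of_pow_eq_one h3
    have h5 : n ∣ (j - i) :=
      (Nat.Coprime.dvd_of_dvd_mul_right (Nat.coprime_comm.mp hpn) h4)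
    have h6 : j - i < n := lt_of_le_of_lt (Nat.sub_le _ _) hjn
    have h7 : 0 < j - i := Nat.sub_pos_of_lt hij
    exact absurd (Nat.le_of_dvd h7 h5) (not_le.mpr h6)
  have hi := polySubst_dvd (α ^ i) hfp
  have hj := polySubst_dvd (α ^ j) hfp
  rw [hsub] at hi hj
  exact ((coprime_aux hne p).of_isCoprime_of_dvd_left hi).of_isCoprime_of_dvd_right hj
end

section
/- Let F = 𝔽₂ be the field with two elements and E an extension field of F, let n be a positive integer with gcd(n, 3) = 1, and let α ∈ E have multiplicative order exactly n. If c ∈ 𝔽₂[X] is nonzero with deg c < n and c(α^i) = 0 for all i ∈ {−5, −1, 1, 5} (negative exponents interpreted through the order of α), then the Hamming weight of c is at least 7. -/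
open Polynomial Finset

lemma char2_sq_inj {E : Type*} [Field E] (h2 : (2:E) = 0) {r s : E} (h : r^2 = s^2) :
    r = s := by
  have h3 : (r - s)^2 = 0 := by linear_combination h + (s^2 - r*s) * h2
  have h4 : r - s = 0 := by
    have := pow_eq_zero_iff (n := 2) (by norm_num) |>.mp h3
    exact this
  exact sub_eq_zero.mp h4
lemma newton5 {E : Type*} [Field E] (h2 : (2:E) = 0) (x1 x2 x3 x4 x5 : E)
    (h1 : x1 + x2 + x3 + x4 + x5 = 0)
    (h5 : x1^5 + x2^5 + x3^5 + x4^5 + x5^5 = 0) :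
    (x1*x2*x3*x4*x5) = (x1*x2 + x1*x3 + x1*x4 + x1*x5 + x2*x3 + x2*x4 + x2*x5 + x3*x4 + x3*x5 + x4*x5) * (x1*x2*x3 + x1*x2*x4 + x1*x2*x5 + x1*x3*x4 + x1*x3*x5 + x1*x4*x5 + x2*x3*x4 + x2*x3*x5 + x2*x4*x5 + x3*x4*x5) := by
  linear_combination h5 - ((x1 + x2 + x3 + x4 + x5)^4 - 5*(x1 + x2 + x3 + x4 + x5)^2*(x1*x2 + x1*x3 + x1*x4 + x1*x5 + x2*x3 + x2*x4 + x2*x5 + x3*x4 + x3*x5 + x4*x5) + 5*(x1*x2 + x1*x3 + x1*x4 + x1*x5 + x2*x3 + x2*x4 + x2*x5 + x3*x4 + x3*x5 + x4*x5)^2 + 5*(x1 + x2 + x3 + x4 + x5)*(x1*x2*x3 + x1*x2*x4 + x1*x2*x5 + x1*x3*x4 + x1*x3*x5 + x1*x4*x5 + x2*x3*x4 + x2*x3*x5 + x2*x4*x5 + x3*x4*x5) - 5*(x1*x2*x3*x4 + x1*x2*x3*x5 + x1*x2*x4*x5 + x1*x3*x4*x5 + x2*x3*x4*x5)) * h1 +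 (2*(x1*x2 + x1*x3 + x1*x4 + x1*x5 + x2*x3 + x2*x4 + x2*x5 + x3*x4 + x3*x5 + x4*x5)*(x1*x2*x3 + x1*x2*x4 + x1*x2*x5 + x1*x3*x4 + x1*x3*x5 + x1*x4*x5 + x2*x3*x4 + x2*x3*x5 + x2*x4*x5 + x3*x4*x5) - 2*(x1*x2*x3*x4*x5)) * h2
lemma newton6 {E : Type*} [Field E] (h2 : (2:E) = 0) (x1 x2 x3 x4 x5 x6 : E)
    (h1 : x1 + x2 + x3 + x4 + x5 + x6 = 0)
    (h5 : x1^5 + x2^5 + x3^5 + x4^5 + x5^5 + x6^5 = 0) :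
    (x1*x2*x3*x4*x5 + x1*x2*x3*x4*x6 + x1*x2*x3*x5*x6 + x1*x2*x4*x5*x6 + x1*x3*x4*x5*x6 + x2*x3*x4*x5*x6) = (x1*x2 + x1*x3 + x1*x4 + x1*x5 + x1*x6 + x2*x3 + x2*x4 + x2*x5 + x2*x6 + x3*x4 + x3*x5 + x3*x6 + x4*x5 + x4*x6 + x5*x6) * (x1*x2*x3 + x1*x2*x4 + x1*x2*x5 + x1*x2*x6 + x1*x3*x4 + x1*x3*x5 + x1*x3*x6 + x1*x4*x5 + x1*x4*x6 + x1*x5*x6 + x2*x3*x4 + x2*x3*x5 + x2*x3*x6 + x2*x4*x5 + x2*x4*x6 + x2*x5*x6 + x3*x4*x5 + x3*x4*x6 + x3*x5*x6 + x4*x5*x6) := by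
  linear_combination h5 - ((x1 + x2 + x3 + x4 + x5 + x6)^4 - 5*(x1 + x2 + x3 + x4 + x5 + x6)^2*(x1*x2 + x1*x3 + x1*x4 + x1*x5 + x1*x6 + x2*x3 + x2*x4 + x2*x5 + x2*x6 + x3*x4 + x3*x5 + x3*x6 + x4*x5 + x4*x6 + x5*x6) + 5*(x1*x2 + x1*x3 + x1*x4 + x1*x5 + x1*x6 + x2*x3 + x2*x4 + x2*x5 + x2*x6 + x3*x4 + x3*x5 + x3*x6 + x4*x5 + x4*x6 + x5*x6)^2 + 5*(x1 + x2 + x3 + x4 + x5 + x6)*(x1*x2*x3 + x1*x2*x4 + x1*x2*x5 + x1*x2*x6 + x1*x3*x4 + x1*x3*x5 + x1*x3*x6 + x1*x4*x5 + x1*x4*x6 + x1*x5*x6 + x2*x3*x4 + x2*x3*x5 + x2*x3*x6 + x2*x4*x5 + x2*x4*x6 + x2*x5*x6 + x3*x4*x5 + x3*x4*x6 + x3*x5*x6 + x4*x5*x6) - 5*(x1*x2*x3*x4 + x1*x2*x3*x5 + x1*x2*x3*x6 + x1*x2*x4*x5 + x1*x2*x4*x6 + x1*x2*x5*x6 + x1*x3*x4*x5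 + x1*x3*x4*x6 + x1*x3*x5*x6 + x1*x4*x5*x6 + x2*x3*x4*x5 + x2*x3*x4*x6 + x2*x3*x5*x6 + x2*x4*x5*x6 + x3*x4*x5*x6)) * h1 + (2*(x1*x2 + x1*x3 + x1*x4 + x1*x5 + x1*x6 + x2*x3 + x2*x4 + x2*x5 + x2*x6 + x3*x4 + x3*x5 + x3*x6 + x4*x5 + x4*x6 + x5*x6)*(x1*x2*x3 + x1*x2*x4 + x1*x2*x5 + x1*x2*x6 + x1*x3*x4 + x1*x3*x5 + x1*x3*x6 + x1*x4*x5 + x1*x4*x6 + x1*x5*x6 + x2*x3*x4 + x2*x3*x5 + x2*x3*x6 + x2*x4*x5 + x2*x4*x6 + x2*x5*x6 + x3*x4*x5 + x3*x4*x6 + x3*x5*x6 + x4*x5*x6) - 2*(x1*x2*x3*x4*x5 + x1*x2*x3*x4*x6 + x1*x2*x3*x5*x6 + x1*x2*x4*x5*x6 + x1*x3*x4*x5*x6 + x2*x3*x4*x5*x6)) * h2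

lemma case3 {E : Type*} [Field E] (h2 : (2:E) = 0) (x1 x2 x3 : E)
    (d12 : x1 ≠ x2) (hc12 : x1^3 = x2^3 → x1 = x2)
    (h1 : x1 + x2 + x3 = 0)
    (he2 : x1*x2 + x1*x3 + x2*x3 = 0) : False := by
  have hp1 : (x1 - x1)*(x1 - x2)*(x1 - x3) = 0 := by ring
  have hp2 : (x2 - x1)*(x2 - x2)*(x2 - x3) = 0 := by ring
  have hr1 : x1^3 = x1*x2*x3 := by linear_combination hp1 + x1^2*h1 - x1*he2
  have hr2 : x2^3 = x1*x2*x3 := by linear_combination hp2 + x2^2*h1 - x2*he2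
  exact d12 (hc12 (hr1.trans hr2.symm))

lemma case4 {E : Type*} [Field E] (h2 : (2:E) = 0) (x1 x2 x3 x4 : E)
    (d12 : x1 ≠ x2) (d13 : x1 ≠ x3) (d23 : x2 ≠ x3)
    (h1 : x1 + x2 + x3 + x4 = 0)
    (he3 : x1*x2*x3 + x1*x2*x4 + x1*x3*x4 + x2*x3*x4 = 0) : False := by
  have hp1 : (x1 - x1)*(x1 - x2)*(x1 - x3)*(x1 - x4) = 0 := by ring
  have hp2 : (x2 - x1)*(x2 - x2)*(x2 - x3)*(x2 - x4) = 0 := by ring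
  have hp3 : (x3 - x1)*(x3 - x2)*(x3 - x3)*(x3 - x4) = 0 := by ring
  have hr1 : x1^4 + (x1*x2 + x1*x3 + x1*x4 + x2*x3 + x2*x4 + x3*x4)*x1^2 + x1*x2*x3*x4 = 0 := by
    linear_combination hp1 + x1^3*h1 + x1*he3
  have hr2 : x2^4 + (x1*x2 + x1*x3 + x1*x4 + x2*x3 + x2*x4 + x3*x4)*x2^2 + x1*x2*x3*x4 = 0 := by
    linear_combination hp2 + x2^3*h1 + x2*he3
  have hr3 : x3^4 + (x1*x2 + x1*x3 + x1*x4 + x2*x3 + x2*x4 + x3*x4)*x3^2 + x1*x2*x3*x4 = 0 := by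
    linear_combination hp3 + x3^3*h1 + x3*he3
  have hne12 : x1 + x2 ≠ 0 := by
    intro h
    exact d12 (sub_eq_zero.mp (by linear_combination h - x2*h2))
  have hne13 : x1 + x3 ≠ 0 := by
    intro h
    exact d13 (sub_eq_zero.mp (by linear_combination h - x3*h2))
  have p12 : (x1+x2)^2*((x1+x2)^2 + (x1*x2 + x1*x3 + x1*x4 + x2*x3 + x2*x4 + x3*x4)) = 0 := by
    linear_combination hr1 + hr2 + (2*x1^3*x2 + 3*x1^2*x2^2 + 2*x1*x2^3 + (x1*x2 + x1*x3 + x1*x4 + x2*x3 + x2*x4 + x3*x4)*x1*x2 - x1*x2*x3*x4)*h2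
  have p13 : (x1+x3)^2*((x1+x3)^2 + (x1*x2 + x1*x3 + x1*x4 + x2*x3 + x2*x4 + x3*x4)) = 0 := by
    linear_combination hr1 + hr3 + (2*x1^3*x3 + 3*x1^2*x3^2 + 2*x1*x3^3 + (x1*x2 + x1*x3 + x1*x4 + x2*x3 + x2*x4 + x3*x4)*x1*x3 - x1*x2*x3*x4)*h2
  have q12 : (x1+x2)^2 = (x1*x2 + x1*x3 + x1*x4 + x2*x3 + x2*x4 + x3*x4) := by
    rcases mul_eq_zero.mp p12 with h | h
    · exact absurd (pow_eq_zero_iff (by norm_num) |>.mp h) hne12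
    · linear_combination h - (x1*x2 + x1*x3 + x1*x4 + x2*x3 + x2*x4 + x3*x4)*h2
  have q13 : (x1+x3)^2 = (x1*x2 + x1*x3 + x1*x4 + x2*x3 + x2*x4 + x3*x4) := by
    rcases mul_eq_zero.mp p13 with h | h
    · exact absurd (pow_eq_zero_iff (by norm_num) |>.mp h) hne13
    · linear_combination h - (x1*x2 + x1*x3 + x1*x4 + x2*x3 + x2*x4 + x3*x4)*h2
  have : x1 + x2 = x1 + x3 := char2_sq_inj h2 (q12.trans q13.symm)
  exact d23 (add_left_cancel this)

lemma case5 {E : Type*} [Field E] (h2 : (2:E) = 0) (x1 x2 x3 x4 x5 : E)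
    (d12 : x1 ≠ x2) (d13 : x1 ≠ x3) (d23 : x2 ≠ x3)
    (hc12 : x1^3 = x2^3 → x1 = x2) (hc13 : x1^3 = x3^3 → x1 = x3)
    (hc23 : x2^3 = x3^3 → x2 = x3)
    (h1 : x1 + x2 + x3 + x4 + x5 = 0)
    (he4 : x1*x2*x3*x4 + x1*x2*x3*x5 + x1*x2*x4*x5 + x1*x3*x4*x5 + x2*x3*x4*x5 = 0)
    (hkey : x1*x2*x3*x4*x5 = (x1*x2 + x1*x3 + x1*x4 + x1*x5 + x2*x3 + x2*x4 + x2*x5 + x3*x4 + x3*x5 + x4*x5) * (x1*x2*x3 + x1*x2*x4 + x1*x2*x5 + x1*x3*x4 + x1*x3*x5 + x1*x4*x5 + x2*x3*x4 + x2*x3*x5 + x2*x4*x5 + x3*x4*x5)) : False := by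
  have hp1 : (x1 - x1)*(x1 - x2)*(x1 - x3)*(x1 - x4)*(x1 - x5) = 0 := by ring
  have hp2 : (x2 - x1)*(x2 - x2)*(x2 - x3)*(x2 - x4)*(x2 - x5) = 0 := by ring
  have hp3 : (x3 - x1)*(x3 - x2)*(x3 - x3)*(x3 - x4)*(x3 - x5) = 0 := by ring
  have hr1 : (x1^2 + (x1*x2 + x1*x3 + x1*x4 + x1*x5 + x2*x3 + x2*x4 + x2*x5 + x3*x4 + x3*x5 + x4*x5))*(x1^3 + (x1*x2*x3 + x1*x2*x4 + x1*x2*x5 + x1*x3*x4 + x1*x3*x5 + x1*x4*x5 + x2*x3*x4 + x2*x3*x5 + x2*x4*x5 + x3*x4*x5)) = 0 := by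
    linear_combination hp1 + x1^4*h1 - x1*he4 + hkey + ((x1*x2*x3 + x1*x2*x4 + x1*x2*x5 + x1*x3*x4 + x1*x3*x5 + x1*x4*x5 + x2*x3*x4 + x2*x3*x5 + x2*x4*x5 + x3*x4*x5)*x1^2 + (x1*x2 + x1*x3 + x1*x4 + x1*x5 + x2*x3 + x2*x4 + x2*x5 + x3*x4 + x3*x5 + x4*x5)*(x1*x2*x3 + x1*x2*x4 + x1*x2*x5 + x1*x3*x4 + x1*x3*x5 + x1*x4*x5 + x2*x3*x4 + x2*x3*x5 + x2*x4*x5 + x3*x4*x5))*h2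
  have hr2 : (x2^2 + (x1*x2 + x1*x3 + x1*x4 + x1*x5 + x2*x3 + x2*x4 + x2*x5 + x3*x4 + x3*x5 + x4*x5))*(x2^3 + (x1*x2*x3 + x1*x2*x4 + x1*x2*x5 + x1*x3*x4 + x1*x3*x5 + x1*x4*x5 + x2*x3*x4 + x2*x3*x5 + x2*x4*x5 + x3*x4*x5)) = 0 := by
    linear_combination hp2 + x2^4*h1 - x2*he4 + hkey + ((x1*x2*x3 + x1*x2*x4 + x1*x2*x5 + x1*x3*x4 + x1*x3*x5 + x1*x4*x5 + x2*x3*x4 + x2*x3*x5 + x2*x4*x5 + x3*x4*x5)*x2^2 + (x1*x2 + x1*x3 + x1*x4 + x1*x5 + x2*x3 + x2*x4 + x2*x5 + x3*x4 + x3*x5 + x4*x5)*(x1*x2*x3 + x1*x2*x4 + x1*x2*x5 + x1*x3*x4 + x1*x3*x5 + x1*x4*x5 + x2*x3*x4 + x2*x3*x5 + x2*x4*x5 + x3*x4*x5))*h2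
  have hr3 : (x3^2 + (x1*x2 + x1*x3 + x1*x4 + x1*x5 + x2*x3 + x2*x4 + x2*x5 + x3*x4 + x3*x5 + x4*x5))*(x3^3 + (x1*x2*x3 + x1*x2*x4 + x1*x2*x5 + x1*x3*x4 + x1*x3*x5 + x1*x4*x5 + x2*x3*x4 + x2*x3*x5 + x2*x4*x5 + x3*x4*x5)) = 0 := by
    linear_combination hp3 + x3^4*h1 - x3*he4 + hkey + ((x1*x2*x3 + x1*x2*x4 + x1*x2*x5 + x1*x3*x4 + x1*x3*x5 + x1*x4*x5 + x2*x3*x4 + x2*x3*x5 + x2*x4*x5 + x3*x4*x5)*x3^2 + (x1*x2 + x1*x3 + x1*x4 + x1*x5 + x2*x3 + x2*x4 + x2*x5 + x3*x4 + x3*x5 + x4*x5)*(x1*x2*x3 + x1*x2*x4 + x1*x2*x5 + x1*x3*x4 + x1*x3*x5 + x1*x4*x5 + x2*x3*x4 + x2*x3*x5 + x2*x4*x5 + x3*x4*x5))*h2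
  have conv : ∀ y : E, (y^2 + (x1*x2 + x1*x3 + x1*x4 + x1*x5 + x2*x3 + x2*x4 + x2*x5 + x3*x4 + x3*x5 + x4*x5))*(y^3 + (x1*x2*x3 + x1*x2*x4 + x1*x2*x5 + x1*x3*x4 + x1*x3*x5 + x1*x4*x5 + x2*x3*x4 + x2*x3*x5 + x2*x4*x5 + x3*x4*x5)) = 0 →
      y^2 = (x1*x2 + x1*x3 + x1*x4 + x1*x5 + x2*x3 + x2*x4 + x2*x5 + x3*x4 + x3*x5 + x4*x5) ∨ y^3 = (x1*x2*x3 + x1*x2*x4 + x1*x2*x5 + x1*x3*x4 + x1*x3*x5 + x1*x4*x5 + x2*x3*x4 + x2*x3*x5 + x2*x4*x5 + x3*x4*x5) := by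
    intro y hy
    rcases mul_eq_zero.mp hy with h | h
    · exact Or.inl (by linear_combination h - (x1*x2 + x1*x3 + x1*x4 + x1*x5 + x2*x3 + x2*x4 + x2*x5 + x3*x4 + x3*x5 + x4*x5)*h2)
    · exact Or.inr (by linear_combination h - (x1*x2*x3 + x1*x2*x4 + x1*x2*x5 + x1*x3*x4 + x1*x3*x5 + x1*x4*x5 + x2*x3*x4 + x2*x3*x5 + x2*x4*x5 + x3*x4*x5)*h2)
  rcases conv x1 hr1 with a1 | b1 <;> rcases conv x2 hr2 with a2 | b2 <;>
    rcases conv x3 hr3 with a3 | b3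
  · exact d12 (char2_sq_inj h2 (a1.trans a2.symm))
  · exact d12 (char2_sq_inj h2 (a1.trans a2.symm))
  · exact d13 (char2_sq_inj h2 (a1.trans a3.symm))
  · exact d23 (hc23 (b2.trans b3.symm))
  · exact d23 (char2_sq_inj h2 (a2.trans a3.symm))
  · exact d13 (hc13 (b1.trans b3.symm))
  · exact d12 (hc12 (b1.trans b2.symm))
  · exact d12 (hc12 (b1.trans b2.symm))

lemma case6a {E : Type*} [Field E] (h2 : (2:E) = 0) (x1 x2 x3 x4 x5 x6 : E)
    (d12 : x1 ≠ x2) (d13 : x1 ≠ x3) (d14 : x1 ≠ x4)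
    (d23 : x2 ≠ x3) (d24 : x2 ≠ x4) (d34 : x3 ≠ x4)
    (h1 : x1 + x2 + x3 + x4 + x5 + x6 = 0)
    (he3 : x1*x2*x3 + x1*x2*x4 + x1*x2*x5 + x1*x2*x6 + x1*x3*x4 + x1*x3*x5 + x1*x3*x6 + x1*x4*x5 + x1*x4*x6 + x1*x5*x6 + x2*x3*x4 + x2*x3*x5 + x2*x3*x6 + x2*x4*x5 + x2*x4*x6 + x2*x5*x6 + x3*x4*x5 + x3*x4*x6 + x3*x5*x6 + x4*x5*x6 = 0)
    (he5 : x1*x2*x3*x4*x5 + x1*x2*x3*x4*x6 + x1*x2*x3*x5*x6 + x1*x2*x4*x5*x6 + x1*x3*x4*x5*x6 + x2*x3*x4*x5*x6 = 0) : False := by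
  have hp1 : (x1 - x1)*(x1 - x2)*(x1 - x3)*(x1 - x4)*(x1 - x5)*(x1 - x6) = 0 := by ring
  have hp2 : (x2 - x1)*(x2 - x2)*(x2 - x3)*(x2 - x4)*(x2 - x5)*(x2 - x6) = 0 := by ring
  have hp3 : (x3 - x1)*(x3 - x2)*(x3 - x3)*(x3 - x4)*(x3 - x5)*(x3 - x6) = 0 := by ring
  have hp4 : (x4 - x1)*(x4 - x2)*(x4 - x3)*(x4 - x4)*(x4 - x5)*(x4 - x6) = 0 := by ring
  have hr1 : x1^6 + (x1*x2 + x1*x3 + x1*x4 + x1*x5 + x1*x6 + x2*x3 + x2*x4 + x2*x5 + x2*x6 + x3*x4 + x3*x5 + x3*x6 + x4*x5 + x4*x6 + x5*x6)*x1^4 + (x1*x2*x3*x4 + x1*x2*x3*x5 + x1*x2*x3*x6 + x1*x2*x4*x5 + x1*x2*x4*x6 + x1*x2*x5*x6 + x1*x3*x4*x5 + x1*x3*x4*x6 + x1*x3*x5*x6 + x1*x4*x5*x6 + x2*x3*x4*x5 + x2*x3*x4*x6 + x2*x3*x5*x6 + x2*x4*x5*x6 + x3*x4*x5*x6)*x1^2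 + x1*x2*x3*x4*x5*x6 = 0 := by
    linear_combination hp1 + x1^5*h1 + x1^3*he3 + x1*he5
  have hr2 : x2^6 + (x1*x2 + x1*x3 + x1*x4 + x1*x5 + x1*x6 + x2*x3 + x2*x4 + x2*x5 + x2*x6 + x3*x4 + x3*x5 + x3*x6 + x4*x5 + x4*x6 + x5*x6)*x2^4 + (x1*x2*x3*x4 + x1*x2*x3*x5 + x1*x2*x3*x6 + x1*x2*x4*x5 + x1*x2*x4*x6 + x1*x2*x5*x6 + x1*x3*x4*x5 + x1*x3*x4*x6 + x1*x3*x5*x6 + x1*x4*x5*x6 + x2*x3*x4*x5 + x2*x3*x4*x6 + x2*x3*x5*x6 + x2*x4*x5*x6 + x3*x4*x5*x6)*x2^2 + x1*x2*x3*x4*x5*x6 = 0 := by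
    linear_combination hp2 + x2^5*h1 + x2^3*he3 + x2*he5
  have hr3 : x3^6 + (x1*x2 + x1*x3 + x1*x4 + x1*x5 + x1*x6 + x2*x3 + x2*x4 + x2*x5 + x2*x6 + x3*x4 + x3*x5 + x3*x6 + x4*x5 + x4*x6 + x5*x6)*x3^4 + (x1*x2*x3*x4 + x1*x2*x3*x5 + x1*x2*x3*x6 + x1*x2*x4*x5 + x1*x2*x4*x6 + x1*x2*x5*x6 + x1*x3*x4*x5 + x1*x3*x4*x6 + x1*x3*x5*x6 + x1*x4*x5*x6 + x2*x3*x4*x5 + x2*x3*x4*x6 + x2*x3*x5*x6 + x2*x4*x5*x6 + x3*x4*x5*x6)*x3^2 + x1*x2*x3*x4*x5*x6 = 0 := by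
    linear_combination hp3 + x3^5*h1 + x3^3*he3 + x3*he5
  have hr4 : x4^6 + (x1*x2 + x1*x3 + x1*x4 + x1*x5 + x1*x6 + x2*x3 + x2*x4 + x2*x5 + x2*x6 + x3*x4 + x3*x5 + x3*x6 + x4*x5 + x4*x6 + x5*x6)*x4^4 + (x1*x2*x3*x4 + x1*x2*x3*x5 + x1*x2*x3*x6 + x1*x2*x4*x5 + x1*x2*x4*x6 + x1*x2*x5*x6 + x1*x3*x4*x5 + x1*x3*x4*x6 + x1*x3*x5*x6 + x1*x4*x5*x6 + x2*x3*x4*x5 + x2*x3*x4*x6 + x2*x3*x5*x6 + x2*x4*x5*x6 + x3*x4*x5*x6)*x4^2 + x1*x2*x3*x4*x5*x6 = 0 := by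
    linear_combination hp4 + x4^5*h1 + x4^3*he3 + x4*he5
  have usub : ∀ a b : E, a ≠ b → a^2 - b^2 ≠ 0 := by
    intro a b hab h
    exact hab (char2_sq_inj h2 (sub_eq_zero.mp h))
  have D12 : x1^4 + x1^2*x2^2 + x2^4 + (x1*x2 + x1*x3 + x1*x4 + x1*x5 + x1*x6 + x2*x3 + x2*x4 + x2*x5 + x2*x6 + x3*x4 + x3*x5 + x3*x6 + x4*x5 + x4*x6 + x5*x6)*(x1^2+x2^2) + (x1*x2*x3*x4 + x1*x2*x3*x5 + x1*x2*x3*x6 + x1*x2*x4*x5 + x1*x2*x4*x6 + x1*x2*x5*x6 + x1*x3*x4*x5 + x1*x3*x4*x6 + x1*x3*x5*x6 + x1*x4*x5*x6 + x2*x3*x4*x5 + x2*x3*x4*x6 + x2*x3*x5*x6 + x2*x4*x5*x6 + x3*x4*x5*x6) = 0 := by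
    have w : (x1^2 - x2^2) * (x1^4 + x1^2*x2^2 + x2^4 + (x1*x2 + x1*x3 + x1*x4 + x1*x5 + x1*x6 + x2*x3 + x2*x4 + x2*x5 + x2*x6 + x3*x4 + x3*x5 + x3*x6 + x4*x5 + x4*x6 + x5*x6)*(x1^2+x2^2) + (x1*x2*x3*x4 + x1*x2*x3*x5 + x1*x2*x3*x6 + x1*x2*x4*x5 + x1*x2*x4*x6 + x1*x2*x5*x6 + x1*x3*x4*x5 + x1*x3*x4*x6 + x1*x3*x5*x6 + x1*x4*x5*x6 + x2*x3*x4*x5 + x2*x3*x4*x6 + x2*x3*x5*x6 + x2*x4*x5*x6 + x3*x4*x5*x6)) = 0 := by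
      linear_combination hr1 - hr2
    rcases mul_eq_zero.mp w with h | h
    · exact absurd h (usub x1 x2 d12)
    · exact h
  have D13 : x1^4 + x1^2*x3^2 + x3^4 + (x1*x2 + x1*x3 + x1*x4 + x1*x5 + x1*x6 + x2*x3 + x2*x4 + x2*x5 + x2*x6 + x3*x4 + x3*x5 + x3*x6 + x4*x5 + x4*x6 + x5*x6)*(x1^2+x3^2) + (x1*x2*x3*x4 + x1*x2*x3*x5 + x1*x2*x3*x6 + x1*x2*x4*x5 + x1*x2*x4*x6 + x1*x2*x5*x6 + x1*x3*x4*x5 + x1*x3*x4*x6 + x1*x3*x5*x6 + x1*x4*x5*x6 + x2*x3*x4*x5 + x2*x3*x4*x6 + x2*x3*x5*x6 + x2*x4*x5*x6 + x3*x4*x5*x6) = 0 := by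
    have w : (x1^2 - x3^2) * (x1^4 + x1^2*x3^2 + x3^4 + (x1*x2 + x1*x3 + x1*x4 + x1*x5 + x1*x6 + x2*x3 + x2*x4 + x2*x5 + x2*x6 + x3*x4 + x3*x5 + x3*x6 + x4*x5 + x4*x6 + x5*x6)*(x1^2+x3^2) + (x1*x2*x3*x4 + x1*x2*x3*x5 + x1*x2*x3*x6 + x1*x2*x4*x5 + x1*x2*x4*x6 + x1*x2*x5*x6 + x1*x3*x4*x5 + x1*x3*x4*x6 + x1*x3*x5*x6 + x1*x4*x5*x6 + x2*x3*x4*x5 + x2*x3*x4*x6 + x2*x3*x5*x6 + x2*x4*x5*x6 + x3*x4*x5*x6)) = 0 := by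
      linear_combination hr1 - hr3
    rcases mul_eq_zero.mp w with h | h
    · exact absurd h (usub x1 x3 d13)
    · exact h
  have D14 : x1^4 + x1^2*x4^2 + x4^4 + (x1*x2 + x1*x3 + x1*x4 + x1*x5 + x1*x6 + x2*x3 + x2*x4 + x2*x5 + x2*x6 + x3*x4 + x3*x5 + x3*x6 + x4*x5 + x4*x6 + x5*x6)*(x1^2+x4^2) + (x1*x2*x3*x4 + x1*x2*x3*x5 + x1*x2*x3*x6 + x1*x2*x4*x5 + x1*x2*x4*x6 + x1*x2*x5*x6 + x1*x3*x4*x5 + x1*x3*x4*x6 + x1*x3*x5*x6 + x1*x4*x5*x6 + x2*x3*x4*x5 + x2*x3*x4*x6 + x2*x3*x5*x6 + x2*x4*x5*x6 + x3*x4*x5*x6) = 0 := by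
    have w : (x1^2 - x4^2) * (x1^4 + x1^2*x4^2 + x4^4 + (x1*x2 + x1*x3 + x1*x4 + x1*x5 + x1*x6 + x2*x3 + x2*x4 + x2*x5 + x2*x6 + x3*x4 + x3*x5 + x3*x6 + x4*x5 + x4*x6 + x5*x6)*(x1^2+x4^2) + (x1*x2*x3*x4 + x1*x2*x3*x5 + x1*x2*x3*x6 + x1*x2*x4*x5 + x1*x2*x4*x6 + x1*x2*x5*x6 + x1*x3*x4*x5 + x1*x3*x4*x6 + x1*x3*x5*x6 + x1*x4*x5*x6 + x2*x3*x4*x5 + x2*x3*x4*x6 + x2*x3*x5*x6 + x2*x4*x5*x6 + x3*x4*x5*x6)) = 0 := by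
      linear_combination hr1 - hr4
    rcases mul_eq_zero.mp w with h | h
    · exact absurd h (usub x1 x4 d14)
    · exact h
  have F3 : x1^2 + x2^2 + x3^2 + (x1*x2 + x1*x3 + x1*x4 + x1*x5 + x1*x6 + x2*x3 + x2*x4 + x2*x5 + x2*x6 + x3*x4 + x3*x5 + x3*x6 + x4*x5 + x4*x6 + x5*x6) = 0 := by
    have w : (x2^2 - x3^2) * (x1^2 + x2^2 + x3^2 + (x1*x2 + x1*x3 + x1*x4 + x1*x5 + x1*x6 + x2*x3 + x2*x4 + x2*x5 + x2*x6 + x3*x4 + x3*x5 + x3*x6 + x4*x5 + x4*x6 + x5*x6)) = 0 := by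
      linear_combination D12 - D13
    rcases mul_eq_zero.mp w with h | h
    · exact absurd h (usub x2 x3 d23)
    · exact h
  have F4 : x1^2 + x2^2 + x4^2 + (x1*x2 + x1*x3 + x1*x4 + x1*x5 + x1*x6 + x2*x3 + x2*x4 + x2*x5 + x2*x6 + x3*x4 + x3*x5 + x3*x6 + x4*x5 + x4*x6 + x5*x6) = 0 := by
    have w : (x2^2 - x4^2) * (x1^2 + x2^2 + x4^2 + (x1*x2 + x1*x3 + x1*x4 + x1*x5 + x1*x6 + x2*x3 + x2*x4 + x2*x5 + x2*x6 + x3*x4 + x3*x5 + x3*x6 + x4*x5 + x4*x6 + x5*x6)) = 0 := by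
      linear_combination D12 - D14
    rcases mul_eq_zero.mp w with h | h
    · exact absurd h (usub x2 x4 d24)
    · exact h
  have : x3^2 = x4^2 := by linear_combination F3 - F4
  exact d34 (char2_sq_inj h2 this)

lemma case6b {E : Type*} [Field E] (h2 : (2:E) = 0) (x1 x2 x3 x4 x5 x6 : E)
    (c12 : x1^3 ≠ x2^3) (c13 : x1^3 ≠ x3^3) (c23 : x2^3 ≠ x3^3)
    (h1 : x1 + x2 + x3 + x4 + x5 + x6 = 0)
    (he2 : x1*x2 + x1*x3 + x1*x4 + x1*x5 + x1*x6 + x2*x3 + x2*x4 + x2*x5 + x2*x6 + x3*x4 + x3*x5 + x3*x6 + x4*x5 + x4*x6 + x5*x6 = 0)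
    (he4 : x1*x2*x3*x4 + x1*x2*x3*x5 + x1*x2*x3*x6 + x1*x2*x4*x5 + x1*x2*x4*x6 + x1*x2*x5*x6 + x1*x3*x4*x5 + x1*x3*x4*x6 + x1*x3*x5*x6 + x1*x4*x5*x6 + x2*x3*x4*x5 + x2*x3*x4*x6 + x2*x3*x5*x6 + x2*x4*x5*x6 + x3*x4*x5*x6 = 0)
    (he5 : x1*x2*x3*x4*x5 + x1*x2*x3*x4*x6 + x1*x2*x3*x5*x6 + x1*x2*x4*x5*x6 + x1*x3*x4*x5*x6 + x2*x3*x4*x5*x6 = 0) : False := by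
  have hp1 : (x1 - x1)*(x1 - x2)*(x1 - x3)*(x1 - x4)*(x1 - x5)*(x1 - x6) = 0 := by ring
  have hp2 : (x2 - x1)*(x2 - x2)*(x2 - x3)*(x2 - x4)*(x2 - x5)*(x2 - x6) = 0 := by ring
  have hp3 : (x3 - x1)*(x3 - x2)*(x3 - x3)*(x3 - x4)*(x3 - x5)*(x3 - x6) = 0 := by ring
  have hr1 : x1^6 + (x1*x2*x3 + x1*x2*x4 + x1*x2*x5 + x1*x2*x6 + x1*x3*x4 + x1*x3*x5 + x1*x3*x6 + x1*x4*x5 + x1*x4*x6 + x1*x5*x6 + x2*x3*x4 + x2*x3*x5 + x2*x3*x6 + x2*x4*x5 + x2*x4*x6 + x2*x5*x6 + x3*x4*x5 + x3*x4*x6 + x3*x5*x6 + x4*x5*x6)*x1^3 + x1*x2*x3*x4*x5*x6 = 0 := by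
    linear_combination hp1 + x1^5*h1 - x1^4*he2 - x1^2*he4 + x1*he5 + ((x1*x2*x3 + x1*x2*x4 + x1*x2*x5 + x1*x2*x6 + x1*x3*x4 + x1*x3*x5 + x1*x3*x6 + x1*x4*x5 + x1*x4*x6 + x1*x5*x6 + x2*x3*x4 + x2*x3*x5 + x2*x3*x6 + x2*x4*x5 + x2*x4*x6 + x2*x5*x6 + x3*x4*x5 + x3*x4*x6 + x3*x5*x6 + x4*x5*x6)*x1^3)*h2
  have hr2 : x2^6 + (x1*x2*x3 + x1*x2*x4 + x1*x2*x5 + x1*x2*x6 + x1*x3*x4 + x1*x3*x5 + x1*x3*x6 + x1*x4*x5 + x1*x4*x6 + x1*x5*x6 + x2*x3*x4 + x2*x3*x5 + x2*x3*x6 + x2*x4*x5 + x2*x4*x6 + x2*x5*x6 + x3*x4*x5 + x3*x4*x6 + x3*x5*x6 + x4*x5*x6)*x2^3 + x1*x2*x3*x4*x5*x6 = 0 := by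
    linear_combination hp2 + x2^5*h1 - x2^4*he2 - x2^2*he4 + x2*he5 + ((x1*x2*x3 + x1*x2*x4 + x1*x2*x5 + x1*x2*x6 + x1*x3*x4 + x1*x3*x5 + x1*x3*x6 + x1*x4*x5 + x1*x4*x6 + x1*x5*x6 + x2*x3*x4 + x2*x3*x5 + x2*x3*x6 + x2*x4*x5 + x2*x4*x6 + x2*x5*x6 + x3*x4*x5 + x3*x4*x6 + x3*x5*x6 + x4*x5*x6)*x2^3)*h2
  have hr3 : x3^6 + (x1*x2*x3 + x1*x2*x4 + x1*x2*x5 + x1*x2*x6 + x1*x3*x4 + x1*x3*x5 + x1*x3*x6 + x1*x4*x5 + x1*x4*x6 + x1*x5*x6 + x2*x3*x4 + x2*x3*x5 + x2*x3*x6 + x2*x4*x5 + x2*x4*x6 + x2*x5*x6 + x3*x4*x5 + x3*x4*x6 + x3*x5*x6 + x4*x5*x6)*x3^3 + x1*x2*x3*x4*x5*x6 = 0 := by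
    linear_combination hp3 + x3^5*h1 - x3^4*he2 - x3^2*he4 + x3*he5 + ((x1*x2*x3 + x1*x2*x4 + x1*x2*x5 + x1*x2*x6 + x1*x3*x4 + x1*x3*x5 + x1*x3*x6 + x1*x4*x5 + x1*x4*x6 + x1*x5*x6 + x2*x3*x4 + x2*x3*x5 + x2*x3*x6 + x2*x4*x5 + x2*x4*x6 + x2*x5*x6 + x3*x4*x5 + x3*x4*x6 + x3*x5*x6 + x4*x5*x6)*x3^3)*h2
  have G12 : x1^3 + x2^3 + (x1*x2*x3 + x1*x2*x4 + x1*x2*x5 + x1*x2*x6 + x1*x3*x4 + x1*x3*x5 + x1*x3*x6 + x1*x4*x5 + x1*x4*x6 + x1*x5*x6 + x2*x3*x4 + x2*x3*x5 + x2*x3*x6 + x2*x4*x5 + x2*x4*x6 + x2*x5*x6 + x3*x4*x5 + x3*x4*x6 + x3*x5*x6 + x4*x5*x6) = 0 := by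
    have w : (x1^3 - x2^3) * (x1^3 + x2^3 + (x1*x2*x3 + x1*x2*x4 + x1*x2*x5 + x1*x2*x6 + x1*x3*x4 + x1*x3*x5 + x1*x3*x6 + x1*x4*x5 + x1*x4*x6 + x1*x5*x6 + x2*x3*x4 + x2*x3*x5 + x2*x3*x6 + x2*x4*x5 + x2*x4*x6 + x2*x5*x6 + x3*x4*x5 + x3*x4*x6 + x3*x5*x6 + x4*x5*x6)) = 0 := by
      linear_combination hr1 - hr2
    rcases mul_eq_zero.mp w with h | h
    · exact absurd (sub_eq_zero.mp h) c12
    · exact h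
  have G13 : x1^3 + x3^3 + (x1*x2*x3 + x1*x2*x4 + x1*x2*x5 + x1*x2*x6 + x1*x3*x4 + x1*x3*x5 + x1*x3*x6 + x1*x4*x5 + x1*x4*x6 + x1*x5*x6 + x2*x3*x4 + x2*x3*x5 + x2*x3*x6 + x2*x4*x5 + x2*x4*x6 + x2*x5*x6 + x3*x4*x5 + x3*x4*x6 + x3*x5*x6 + x4*x5*x6) = 0 := by
    have w : (x1^3 - x3^3) * (x1^3 + x3^3 + (x1*x2*x3 + x1*x2*x4 + x1*x2*x5 + x1*x2*x6 + x1*x3*x4 + x1*x3*x5 + x1*x3*x6 + x1*x4*x5 + x1*x4*x6 + x1*x5*x6 + x2*x3*x4 + x2*x3*x5 + x2*x3*x6 + x2*x4*x5 + x2*x4*x6 + x2*x5*x6 + x3*x4*x5 + x3*x4*x6 + x3*x5*x6 + x4*x5*x6)) = 0 := by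
      linear_combination hr1 - hr3
    rcases mul_eq_zero.mp w with h | h
    · exact absurd (sub_eq_zero.mp h) c13
    · exact h
  have : x2^3 = x3^3 := by linear_combination G12 - G13
  exact c23 this

lemma invA {E : Type*} [Field E] {z : E} (hz : z ≠ 0) (y : E) : (y * z) * z⁻¹ = y := by
  rw [mul_assoc, mul_inv_cancel₀ hz, mul_one]

lemma invB {E : Type*} [Field E] {z1 z2 : E} (h1 : z1 ≠ 0) (h2 : z2 ≠ 0) (y : E) :
    (y * z1 * z2) * (z1⁻¹ * z2⁻¹) = y := by
  have h : (y * z1 * z2) * (z1⁻¹ * z2⁻¹) = y * (z1 * z1⁻¹) * (z2 * z2⁻¹) := by ring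
  rw [h, mul_inv_cancel₀ h1, mul_inv_cancel₀ h2, mul_one, mul_one]

lemma invC {E : Type*} [Field E] {z1 z2 z3 : E} (h1 : z1 ≠ 0) (h2 : z2 ≠ 0) (h3 : z3 ≠ 0)
    (y : E) : (y * z1 * z2 * z3) * (z1⁻¹ * z2⁻¹ * z3⁻¹) = y := by
  have h : (y * z1 * z2 * z3) * (z1⁻¹ * z2⁻¹ * z3⁻¹)
      = y * (z1 * z1⁻¹) * (z2 * z2⁻¹) * (z3 * z3⁻¹) := by ring
  rw [h, mul_inv_cancel₀ h1, mul_inv_cancel₀ h2, mul_inv_cancel₀ h3, mul_one, mul_one, mul_one]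

lemma invE {E : Type*} [Field E] {z1 z2 z3 z4 z5 : E} (h1 : z1 ≠ 0) (h2 : z2 ≠ 0)
    (h3 : z3 ≠ 0) (h4 : z4 ≠ 0) (h5 : z5 ≠ 0) (y : E) :
    (y * z1 * z2 * z3 * z4 * z5) * (z1⁻¹ * z2⁻¹ * z3⁻¹ * z4⁻¹ * z5⁻¹) = y := by
  have h : (y * z1 * z2 * z3 * z4 * z5) * (z1⁻¹ * z2⁻¹ * z3⁻¹ * z4⁻¹ * z5⁻¹)
      = y * (z1 * z1⁻¹) * (z2 * z2⁻¹) * (z3 * z3⁻¹) * (z4 * z4⁻¹) * (z5 * z5⁻¹) := by ring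
  rw [h, mul_inv_cancel₀ h1, mul_inv_cancel₀ h2, mul_inv_cancel₀ h3, mul_inv_cancel₀ h4,
    mul_inv_cancel₀ h5, mul_one, mul_one, mul_one, mul_one, mul_one]

set_option maxHeartbeats 3200000 in
lemma key_lemma {E : Type*} [Field E] (h2 : (2:E) = 0) {n : ℕ} (hn : 0 < n)
    (hn3 : Nat.gcd n 3 = 1) {α : E} (hα : orderOf α = n)
    (S : Finset ℕ) (hSn : ∀ a ∈ S, a < n) (hne : S.Nonempty)
    (H1 : ∑ a ∈ S, α ^ a = 0)
    (H5 : ∑ a ∈ S, (α ^ a)^5 = 0)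
    (G1 : ∑ a ∈ S, (α ^ a)⁻¹ = 0)
    (G5 : ∑ a ∈ S, ((α ^ a)⁻¹)^5 = 0) : 7 ≤ S.card := by
  have hα0 : α ≠ 0 := by
    intro h
    have h1 := pow_orderOf_eq_one α
    rw [hα, h, zero_pow hn.ne'] at h1
    exact zero_ne_one h1
  have hinj : ∀ m : ℕ, Nat.Coprime n m → ∀ a b : ℕ, a < n → b < n →
      α^(a*m) = α^(b*m) → a = b := by
    intro m hm
    suffices H : ∀ a b : ℕ, a ≤ b → b < n → α^(a*m) = α^(b*m) → a = b by
      intro a b ha hb h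
      rcases le_total a b with hab | hab
      · exact H a b hab hb h
      · exact (H b a hab ha h.symm).symm
    intro a b hab hb h
    have e1 : α ^ (a*m) * α ^ ((b-a)*m) = α ^ (a*m) * 1 := by
      rw [mul_one, ← pow_add, ← add_mul, Nat.add_sub_cancel' hab, h]
    have e2 : α ^ ((b-a)*m) = 1 := mul_left_cancel₀ (pow_ne_zero _ hα0) e1
    have e3 : n ∣ (b-a)*m := hα ▸ orderOf_dvd_of_pow_eq_one e2
    have e4 : n ∣ (b-a) := Nat.Coprime.dvd_of_dvd_mul_right hm e3
    have e5 : b - a = 0 := Nat.eq_zero_of_dvd_of_lt e4 (by omega)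
    omega
  have powinj : ∀ a b : ℕ, a < n → b < n → α^a = α^b → a = b := by
    intro a b ha hb h
    exact hinj 1 (Nat.coprime_one_right n) a b ha hb (by simpa using h)
  have cubeinj : ∀ a b : ℕ, a < n → b < n → (α^a)^3 = (α^b)^3 → a = b := by
    intro a b ha hb h
    exact hinj 3 hn3 a b ha hb (by simpa [pow_mul] using h)
  by_contra hlt
  push_neg at hlt
  have hpos : 0 < S.card := Finset.card_pos.mpr hne
  have hc : S.card = 1 ∨ S.card = 2 ∨ S.card = 3 ∨ S.card = 4 ∨ S.card = 5 ∨ S.card = 6 := by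
    omega
  rcases hc with h|h|h|h|h|h
  · -- card 1
    obtain ⟨a1, T1, hm1, hi1, hc1⟩ := Finset.card_eq_succ.mp (show S.card = 0 + 1 by omega)
    subst hi1
    have hTe : T1 = ∅ := Finset.card_eq_zero.mp (by omega)
    subst hTe
    rw [Finset.sum_insert hm1, Finset.sum_empty] at H1 H5 G1 G5
    have ha1 : a1 < n := hSn a1 (by simp)
    have nz1 : α ^ a1 ≠ 0 := pow_ne_zero _ hα0
    exact nz1 (by linear_combination H1)
  · -- card 2
    obtain ⟨a1, T1, hm1, hi1, hc1⟩ := Finset.card_eq_succ.mp (show S.card = 1 + 1 by omega)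
    subst hi1
    obtain ⟨a2, T2, hm2, hi2, hc2⟩ := Finset.card_eq_succ.mp (show T1.card = 0 + 1 by omega)
    subst hi2
    have hTe : T2 = ∅ := Finset.card_eq_zero.mp (by omega)
    subst hTe
    rw [Finset.sum_insert hm1, Finset.sum_insert hm2, Finset.sum_empty] at H1 H5 G1 G5
    have ha1 : a1 < n := hSn a1 (by simp)
    have ha2 : a2 < n := hSn a2 (by simp)
    have ne12 : a1 ≠ a2 := fun h => hm1 (by simp [h])
    set x1 := α ^ a1 with hx1
    set x2 := α ^ a2 with hx2
    have nz1 : x1 ≠ 0 := pow_ne_zero _ hα0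
    have nz2 : x2 ≠ 0 := pow_ne_zero _ hα0
    have d12 : x1 ≠ x2 := fun h => ne12 (powinj a1 a2 ha1 ha2 h)
    exact d12 (by linear_combination H1 - x2*h2)
  · -- card 3
    obtain ⟨a1, T1, hm1, hi1, hc1⟩ := Finset.card_eq_succ.mp (show S.card = 2 + 1 by omega)
    subst hi1
    obtain ⟨a2, T2, hm2, hi2, hc2⟩ := Finset.card_eq_succ.mp (show T1.card = 1 + 1 by omega)
    subst hi2
    obtain ⟨a3, T3, hm3, hi3, hc3⟩ := Finset.card_eq_succ.mp (show T2.card = 0 + 1 by omega)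
    subst hi3
    have hTe : T3 = ∅ := Finset.card_eq_zero.mp (by omega)
    subst hTe
    rw [Finset.sum_insert hm1, Finset.sum_insert hm2, Finset.sum_insert hm3, Finset.sum_empty] at H1 H5 G1 G5
    have ha1 : a1 < n := hSn a1 (by simp)
    have ha2 : a2 < n := hSn a2 (by simp)
    have ha3 : a3 < n := hSn a3 (by simp)
    have ne12 : a1 ≠ a2 := fun h => hm1 (by simp [h])
    set x1 := α ^ a1 with hx1
    set x2 := α ^ a2 with hx2
    set x3 := α ^ a3 with hx3
    have nz1 : x1 ≠ 0 := pow_ne_zero _ hα0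
    have nz2 : x2 ≠ 0 := pow_ne_zero _ hα0
    have nz3 : x3 ≠ 0 := pow_ne_zero _ hα0
    have d12 : x1 ≠ x2 := fun h => ne12 (powinj a1 a2 ha1 ha2 h)
    have c12 : x1^3 = x2^3 → x1 = x2 := fun h => by rw [hx1, hx2, cubeinj a1 a2 ha1 ha2 h]
    have hinv : x1⁻¹ + x2⁻¹ + x3⁻¹ = 0 := by linear_combination G1
    have hq : (x1*x2*x3) * (x1⁻¹ + x2⁻¹ + x3⁻¹) = x1*x2 + x1*x3 + x2*x3 := by
      linear_combination invA nz1 (x2*x3) + invA nz2 (x1*x3) + invA nz3 (x1*x2)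
    have heW : x1*x2 + x1*x3 + x2*x3 = 0 := by rw [← hq, hinv, mul_zero]
    exact case3 h2 x1 x2 x3 d12 c12 (by linear_combination H1) (by linear_combination heW)
  · -- card 4
    obtain ⟨a1, T1, hm1, hi1, hc1⟩ := Finset.card_eq_succ.mp (show S.card = 3 + 1 by omega)
    subst hi1
    obtain ⟨a2, T2, hm2, hi2, hc2⟩ := Finset.card_eq_succ.mp (show T1.card = 2 + 1 by omega)
    subst hi2
    obtain ⟨a3, T3, hm3, hi3, hc3⟩ := Finset.card_eq_succ.mp (show T2.card = 1 + 1 by omega)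
    subst hi3
    obtain ⟨a4, T4, hm4, hi4, hc4⟩ := Finset.card_eq_succ.mp (show T3.card = 0 + 1 by omega)
    subst hi4
    have hTe : T4 = ∅ := Finset.card_eq_zero.mp (by omega)
    subst hTe
    rw [Finset.sum_insert hm1, Finset.sum_insert hm2, Finset.sum_insert hm3, Finset.sum_insert hm4, Finset.sum_empty] at H1 H5 G1 G5
    have ha1 : a1 < n := hSn a1 (by simp)
    have ha2 : a2 < n := hSn a2 (by simp)
    have ha3 : a3 < n := hSn a3 (by simp)
    have ha4 : a4 < n := hSn a4 (by simp)
    have ne12 : a1 ≠ a2 := fun h => hm1 (by simp [h])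
    have ne13 : a1 ≠ a3 := fun h => hm1 (by simp [h])
    have ne23 : a2 ≠ a3 := fun h => hm2 (by simp [h])
    set x1 := α ^ a1 with hx1
    set x2 := α ^ a2 with hx2
    set x3 := α ^ a3 with hx3
    set x4 := α ^ a4 with hx4
    have nz1 : x1 ≠ 0 := pow_ne_zero _ hα0
    have nz2 : x2 ≠ 0 := pow_ne_zero _ hα0
    have nz3 : x3 ≠ 0 := pow_ne_zero _ hα0
    have nz4 : x4 ≠ 0 := pow_ne_zero _ hα0
    have d12 : x1 ≠ x2 := fun h => ne12 (powinj a1 a2 ha1 ha2 h)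
    have d13 : x1 ≠ x3 := fun h => ne13 (powinj a1 a3 ha1 ha3 h)
    have d23 : x2 ≠ x3 := fun h => ne23 (powinj a2 a3 ha2 ha3 h)
    have hinv : x1⁻¹ + x2⁻¹ + x3⁻¹ + x4⁻¹ = 0 := by linear_combination G1
    have hq : (x1*x2*x3*x4) * (x1⁻¹ + x2⁻¹ + x3⁻¹ + x4⁻¹) = x1*x2*x3 + x1*x2*x4 + x1*x3*x4 + x2*x3*x4 := by
      linear_combination invA nz1 (x2*x3*x4) + invA nz2 (x1*x3*x4) + invA nz3 (x1*x2*x4) + invA nz4 (x1*x2*x3)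
    have heW : x1*x2*x3 + x1*x2*x4 + x1*x3*x4 + x2*x3*x4 = 0 := by rw [← hq, hinv, mul_zero]
    exact case4 h2 x1 x2 x3 x4 d12 d13 d23 (by linear_combination H1) (by linear_combination heW)
  · -- card 5
    obtain ⟨a1, T1, hm1, hi1, hc1⟩ := Finset.card_eq_succ.mp (show S.card = 4 + 1 by omega)
    subst hi1
    obtain ⟨a2, T2, hm2, hi2, hc2⟩ := Finset.card_eq_succ.mp (show T1.card = 3 + 1 by omega)
    subst hi2
    obtain ⟨a3, T3, hm3, hi3, hc3⟩ := Finset.card_eq_succ.mp (show T2.card = 2 + 1 by omega)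
    subst hi3
    obtain ⟨a4, T4, hm4, hi4, hc4⟩ := Finset.card_eq_succ.mp (show T3.card = 1 + 1 by omega)
    subst hi4
    obtain ⟨a5, T5, hm5, hi5, hc5⟩ := Finset.card_eq_succ.mp (show T4.card = 0 + 1 by omega)
    subst hi5
    have hTe : T5 = ∅ := Finset.card_eq_zero.mp (by omega)
    subst hTe
    rw [Finset.sum_insert hm1, Finset.sum_insert hm2, Finset.sum_insert hm3, Finset.sum_insert hm4, Finset.sum_insert hm5, Finset.sum_empty] at H1 H5 G1 G5
    have ha1 : a1 < n := hSn a1 (by simp)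
    have ha2 : a2 < n := hSn a2 (by simp)
    have ha3 : a3 < n := hSn a3 (by simp)
    have ha4 : a4 < n := hSn a4 (by simp)
    have ha5 : a5 < n := hSn a5 (by simp)
    have ne12 : a1 ≠ a2 := fun h => hm1 (by simp [h])
    have ne13 : a1 ≠ a3 := fun h => hm1 (by simp [h])
    have ne23 : a2 ≠ a3 := fun h => hm2 (by simp [h])
    set x1 := α ^ a1 with hx1
    set x2 := α ^ a2 with hx2
    set x3 := α ^ a3 with hx3
    set x4 := α ^ a4 with hx4
    set x5 := α ^ a5 with hx5
    have nz1 : x1 ≠ 0 := pow_ne_zero _ hα0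
    have nz2 : x2 ≠ 0 := pow_ne_zero _ hα0
    have nz3 : x3 ≠ 0 := pow_ne_zero _ hα0
    have nz4 : x4 ≠ 0 := pow_ne_zero _ hα0
    have nz5 : x5 ≠ 0 := pow_ne_zero _ hα0
    have d12 : x1 ≠ x2 := fun h => ne12 (powinj a1 a2 ha1 ha2 h)
    have d13 : x1 ≠ x3 := fun h => ne13 (powinj a1 a3 ha1 ha3 h)
    have d23 : x2 ≠ x3 := fun h => ne23 (powinj a2 a3 ha2 ha3 h)
    have c12 : x1^3 = x2^3 → x1 = x2 := fun h => by rw [hx1, hx2, cubeinj a1 a2 ha1 ha2 h]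
    have c13 : x1^3 = x3^3 → x1 = x3 := fun h => by rw [hx1, hx3, cubeinj a1 a3 ha1 ha3 h]
    have c23 : x2^3 = x3^3 → x2 = x3 := fun h => by rw [hx2, hx3, cubeinj a2 a3 ha2 ha3 h]
    have hinv : x1⁻¹ + x2⁻¹ + x3⁻¹ + x4⁻¹ + x5⁻¹ = 0 := by linear_combination G1
    have hq : (x1*x2*x3*x4*x5) * (x1⁻¹ + x2⁻¹ + x3⁻¹ + x4⁻¹ + x5⁻¹) = x1*x2*x3*x4 + x1*x2*x3*x5 + x1*x2*x4*x5 + x1*x3*x4*x5 + x2*x3*x4*x5 := by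
      linear_combination invA nz1 (x2*x3*x4*x5) + invA nz2 (x1*x3*x4*x5) + invA nz3 (x1*x2*x4*x5) + invA nz4 (x1*x2*x3*x5) + invA nz5 (x1*x2*x3*x4)
    have heW : x1*x2*x3*x4 + x1*x2*x3*x5 + x1*x2*x4*x5 + x1*x3*x4*x5 + x2*x3*x4*x5 = 0 := by rw [← hq, hinv, mul_zero]
    have hkey := newton5 h2 x1 x2 x3 x4 x5 (by linear_combination H1) (by linear_combination H5)
    exact case5 h2 x1 x2 x3 x4 x5 d12 d13 d23 c12 c13 c23 (by linear_combination H1)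
      (by linear_combination heW) (by linear_combination hkey)
  · -- card 6
    obtain ⟨a1, T1, hm1, hi1, hc1⟩ := Finset.card_eq_succ.mp (show S.card = 5 + 1 by omega)
    subst hi1
    obtain ⟨a2, T2, hm2, hi2, hc2⟩ := Finset.card_eq_succ.mp (show T1.card = 4 + 1 by omega)
    subst hi2
    obtain ⟨a3, T3, hm3, hi3, hc3⟩ := Finset.card_eq_succ.mp (show T2.card = 3 + 1 by omega)
    subst hi3
    obtain ⟨a4, T4, hm4, hi4, hc4⟩ := Finset.card_eq_succ.mp (show T3.card = 2 + 1 by omega)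
    subst hi4
    obtain ⟨a5, T5, hm5, hi5, hc5⟩ := Finset.card_eq_succ.mp (show T4.card = 1 + 1 by omega)
    subst hi5
    obtain ⟨a6, T6, hm6, hi6, hc6⟩ := Finset.card_eq_succ.mp (show T5.card = 0 + 1 by omega)
    subst hi6
    have hTe : T6 = ∅ := Finset.card_eq_zero.mp (by omega)
    subst hTe
    rw [Finset.sum_insert hm1, Finset.sum_insert hm2, Finset.sum_insert hm3, Finset.sum_insert hm4, Finset.sum_insert hm5, Finset.sum_insert hm6, Finset.sum_empty] at H1 H5 G1 G5
    have ha1 : a1 < n := hSn a1 (by simp)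
    have ha2 : a2 < n := hSn a2 (by simp)
    have ha3 : a3 < n := hSn a3 (by simp)
    have ha4 : a4 < n := hSn a4 (by simp)
    have ha5 : a5 < n := hSn a5 (by simp)
    have ha6 : a6 < n := hSn a6 (by simp)
    have ne12 : a1 ≠ a2 := fun h => hm1 (by simp [h])
    have ne13 : a1 ≠ a3 := fun h => hm1 (by simp [h])
    have ne14 : a1 ≠ a4 := fun h => hm1 (by simp [h])
    have ne23 : a2 ≠ a3 := fun h => hm2 (by simp [h])
    have ne24 : a2 ≠ a4 := fun h => hm2 (by simp [h])
    have ne34 : a3 ≠ a4 := fun h => hm3 (by simp [h])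
    set x1 := α ^ a1 with hx1
    set x2 := α ^ a2 with hx2
    set x3 := α ^ a3 with hx3
    set x4 := α ^ a4 with hx4
    set x5 := α ^ a5 with hx5
    set x6 := α ^ a6 with hx6
    have nz1 : x1 ≠ 0 := pow_ne_zero _ hα0
    have nz2 : x2 ≠ 0 := pow_ne_zero _ hα0
    have nz3 : x3 ≠ 0 := pow_ne_zero _ hα0
    have nz4 : x4 ≠ 0 := pow_ne_zero _ hα0
    have nz5 : x5 ≠ 0 := pow_ne_zero _ hα0
    have nz6 : x6 ≠ 0 := pow_ne_zero _ hα0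
    have d12 : x1 ≠ x2 := fun h => ne12 (powinj a1 a2 ha1 ha2 h)
    have d13 : x1 ≠ x3 := fun h => ne13 (powinj a1 a3 ha1 ha3 h)
    have d14 : x1 ≠ x4 := fun h => ne14 (powinj a1 a4 ha1 ha4 h)
    have d23 : x2 ≠ x3 := fun h => ne23 (powinj a2 a3 ha2 ha3 h)
    have d24 : x2 ≠ x4 := fun h => ne24 (powinj a2 a4 ha2 ha4 h)
    have d34 : x3 ≠ x4 := fun h => ne34 (powinj a3 a4 ha3 ha4 h)
    have cne12 : x1^3 ≠ x2^3 := fun h => ne12 (cubeinj a1 a2 ha1 ha2 h)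
    have cne13 : x1^3 ≠ x3^3 := fun h => ne13 (cubeinj a1 a3 ha1 ha3 h)
    have cne23 : x2^3 ≠ x3^3 := fun h => ne23 (cubeinj a2 a3 ha2 ha3 h)
    have hinv : x1⁻¹ + x2⁻¹ + x3⁻¹ + x4⁻¹ + x5⁻¹ + x6⁻¹ = 0 := by linear_combination G1
    have hq : (x1*x2*x3*x4*x5*x6) * (x1⁻¹ + x2⁻¹ + x3⁻¹ + x4⁻¹ + x5⁻¹ + x6⁻¹) = x1*x2*x3*x4*x5 + x1*x2*x3*x4*x6 + x1*x2*x3*x5*x6 + x1*x2*x4*x5*x6 + x1*x3*x4*x5*x6 + x2*x3*x4*x5*x6 := by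
      linear_combination invA nz1 (x2*x3*x4*x5*x6) + invA nz2 (x1*x3*x4*x5*x6) + invA nz3 (x1*x2*x4*x5*x6) + invA nz4 (x1*x2*x3*x5*x6) + invA nz5 (x1*x2*x3*x4*x6) + invA nz6 (x1*x2*x3*x4*x5)
    have heW : x1*x2*x3*x4*x5 + x1*x2*x3*x4*x6 + x1*x2*x3*x5*x6 + x1*x2*x4*x5*x6 + x1*x3*x4*x5*x6 + x2*x3*x4*x5*x6 = 0 := by rw [← hq, hinv, mul_zero]
    have hkey := newton6 h2 x1 x2 x3 x4 x5 x6 (by linear_combination H1) (by linear_combination H5)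
    have hE23 : (x1*x2 + x1*x3 + x1*x4 + x1*x5 + x1*x6 + x2*x3 + x2*x4 + x2*x5 + x2*x6 + x3*x4 + x3*x5 + x3*x6 + x4*x5 + x4*x6 + x5*x6) * (x1*x2*x3 + x1*x2*x4 + x1*x2*x5 + x1*x2*x6 + x1*x3*x4 + x1*x3*x5 + x1*x3*x6 + x1*x4*x5 + x1*x4*x6 + x1*x5*x6 + x2*x3*x4 + x2*x3*x5 + x2*x3*x6 + x2*x4*x5 + x2*x4*x6 + x2*x5*x6 + x3*x4*x5 + x3*x4*x6 + x3*x5*x6 + x4*x5*x6) = 0 := by rw [← hkey]; linear_combination heW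
    have key2 := newton6 h2 x1⁻¹ x2⁻¹ x3⁻¹ x4⁻¹ x5⁻¹ x6⁻¹ (by linear_combination G1)
      (by linear_combination G5)
    have u2 : (x1*x2*x3*x4*x5*x6) * (x1⁻¹*x2⁻¹ + x1⁻¹*x3⁻¹ + x1⁻¹*x4⁻¹ + x1⁻¹*x5⁻¹ + x1⁻¹*x6⁻¹ + x2⁻¹*x3⁻¹ + x2⁻¹*x4⁻¹ + x2⁻¹*x5⁻¹ + x2⁻¹*x6⁻¹ + x3⁻¹*x4⁻¹ + x3⁻¹*x5⁻¹ + x3⁻¹*x6⁻¹ + x4⁻¹*x5⁻¹ + x4⁻¹*x6⁻¹ + x5⁻¹*x6⁻¹) = x1*x2*x3*x4 + x1*x2*x3*x5 + x1*x2*x3*x6 + x1*x2*x4*x5 + x1*x2*x4*x6 + x1*x2*x5*x6 + x1*x3*x4*x5 + x1*x3*x4*x6 + x1*x3*x5*x6 + x1*x4*x5*x6 + x2*x3*x4*x5 + x2*x3*x4*x6 + x2*x3*x5*x6 + x2*x4*x5*x6 + x3*x4*x5*x6 := by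
      linear_combination invB nz1 nz2 (x3*x4*x5*x6) + invB nz1 nz3 (x2*x4*x5*x6) + invB nz1 nz4 (x2*x3*x5*x6) + invB nz1 nz5 (x2*x3*x4*x6) + invB nz1 nz6 (x2*x3*x4*x5) + invB nz2 nz3 (x1*x4*x5*x6) + invB nz2 nz4 (x1*x3*x5*x6) + invB nz2 nz5 (x1*x3*x4*x6) + invB nz2 nz6 (x1*x3*x4*x5) + invB nz3 nz4 (x1*x2*x5*x6) + invB nz3 nz5 (x1*x2*x4*x6) + invB nz3 nz6 (x1*x2*x4*x5) + invB nz4 nz5 (x1*x2*x3*x6) + invB nz4 nz6 (x1*x2*x3*x5) + invB nz5 nz6 (x1*x2*x3*x4)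
    have u3 : (x1*x2*x3*x4*x5*x6) * (x1⁻¹*x2⁻¹*x3⁻¹ + x1⁻¹*x2⁻¹*x4⁻¹ + x1⁻¹*x2⁻¹*x5⁻¹ + x1⁻¹*x2⁻¹*x6⁻¹ + x1⁻¹*x3⁻¹*x4⁻¹ + x1⁻¹*x3⁻¹*x5⁻¹ + x1⁻¹*x3⁻¹*x6⁻¹ + x1⁻¹*x4⁻¹*x5⁻¹ + x1⁻¹*x4⁻¹*x6⁻¹ + x1⁻¹*x5⁻¹*x6⁻¹ + x2⁻¹*x3⁻¹*x4⁻¹ + x2⁻¹*x3⁻¹*x5⁻¹ + x2⁻¹*x3⁻¹*x6⁻¹ + x2⁻¹*x4⁻¹*x5⁻¹ + x2⁻¹*x4⁻¹*x6⁻¹ + x2⁻¹*x5⁻¹*x6⁻¹ + x3⁻¹*x4⁻¹*x5⁻¹ + x3⁻¹*x4⁻¹*x6⁻¹ + x3⁻¹*x5⁻¹*x6⁻¹ + x4⁻¹*x5⁻¹*x6⁻¹) = x1*x2*x3 + x1*x2*x4 + x1*x2*x5 + x1*x2*x6 + x1*x3*x4 + x1*x3*x5 + x1*x3*x6 + x1*x4*x5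 + x1*x4*x6 + x1*x5*x6 + x2*x3*x4 + x2*x3*x5 + x2*x3*x6 + x2*x4*x5 + x2*x4*x6 + x2*x5*x6 + x3*x4*x5 + x3*x4*x6 + x3*x5*x6 + x4*x5*x6 := by
      linear_combination invC nz1 nz2 nz3 (x4*x5*x6) + invC nz1 nz2 nz4 (x3*x5*x6) + invC nz1 nz2 nz5 (x3*x4*x6) + invC nz1 nz2 nz6 (x3*x4*x5) + invC nz1 nz3 nz4 (x2*x5*x6) + invC nz1 nz3 nz5 (x2*x4*x6) + invC nz1 nz3 nz6 (x2*x4*x5) + invC nz1 nz4 nz5 (x2*x3*x6) + invC nz1 nz4 nz6 (x2*x3*x5) + invC nz1 nz5 nz6 (x2*x3*x4) + invC nz2 nz3 nz4 (x1*x5*x6) + invC nz2 nz3 nz5 (x1*x4*x6) + invC nz2 nz3 nz6 (x1*x4*x5) + invC nz2 nz4 nz5 (x1*x3*x6) + invC nz2 nz4 nz6 (x1*x3*x5) + invC nz2 nz5 nz6 (x1*x3*x4) + invC nz3 nz4 nz5 (x1*x2*x6) + invC nz3 nz4 nz6 (x1*x2*x5) + invC nz3 nz5 nz6 (x1*x2*x4)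 + invC nz4 nz5 nz6 (x1*x2*x3)
    have u5 : (x1*x2*x3*x4*x5*x6) * (x1⁻¹*x2⁻¹*x3⁻¹*x4⁻¹*x5⁻¹ + x1⁻¹*x2⁻¹*x3⁻¹*x4⁻¹*x6⁻¹ + x1⁻¹*x2⁻¹*x3⁻¹*x5⁻¹*x6⁻¹ + x1⁻¹*x2⁻¹*x4⁻¹*x5⁻¹*x6⁻¹ + x1⁻¹*x3⁻¹*x4⁻¹*x5⁻¹*x6⁻¹ + x2⁻¹*x3⁻¹*x4⁻¹*x5⁻¹*x6⁻¹) = x1 + x2 + x3 + x4 + x5 + x6 := by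
      linear_combination invE nz1 nz2 nz3 nz4 nz5 (x6) + invE nz1 nz2 nz3 nz4 nz6 (x5) + invE nz1 nz2 nz3 nz5 nz6 (x4) + invE nz1 nz2 nz4 nz5 nz6 (x3) + invE nz1 nz3 nz4 nz5 nz6 (x2) + invE nz2 nz3 nz4 nz5 nz6 (x1)
    have hs6 : x1 + x2 + x3 + x4 + x5 + x6 = 0 := by linear_combination H1
    have hE34 : (x1*x2*x3 + x1*x2*x4 + x1*x2*x5 + x1*x2*x6 + x1*x3*x4 + x1*x3*x5 + x1*x3*x6 + x1*x4*x5 + x1*x4*x6 + x1*x5*x6 + x2*x3*x4 + x2*x3*x5 + x2*x3*x6 + x2*x4*x5 + x2*x4*x6 + x2*x5*x6 + x3*x4*x5 + x3*x4*x6 + x3*x5*x6 + x4*x5*x6) * (x1*x2*x3*x4 + x1*x2*x3*x5 + x1*x2*x3*x6 + x1*x2*x4*x5 + x1*x2*x4*x6 + x1*x2*x5*x6 + x1*x3*x4*x5 + x1*x3*x4*x6 + x1*x3*x5*x6 + x1*x4*x5*x6 + x2*x3*x4*x5 + x2*x3*x4*x6 + x2*x3*x5*x6 + x2*x4*x5*x6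 + x3*x4*x5*x6) = 0 := by
      calc (x1*x2*x3 + x1*x2*x4 + x1*x2*x5 + x1*x2*x6 + x1*x3*x4 + x1*x3*x5 + x1*x3*x6 + x1*x4*x5 + x1*x4*x6 + x1*x5*x6 + x2*x3*x4 + x2*x3*x5 + x2*x3*x6 + x2*x4*x5 + x2*x4*x6 + x2*x5*x6 + x3*x4*x5 + x3*x4*x6 + x3*x5*x6 + x4*x5*x6) * (x1*x2*x3*x4 + x1*x2*x3*x5 + x1*x2*x3*x6 + x1*x2*x4*x5 + x1*x2*x4*x6 + x1*x2*x5*x6 + x1*x3*x4*x5 + x1*x3*x4*x6 + x1*x3*x5*x6 + x1*x4*x5*x6 + x2*x3*x4*x5 + x2*x3*x4*x6 + x2*x3*x5*x6 + x2*x4*x5*x6 + x3*x4*x5*x6) = ((x1*x2*x3*x4*x5*x6) * (x1⁻¹*x2⁻¹*x3⁻¹ + x1⁻¹*x2⁻¹*x4⁻¹ + x1⁻¹*x2⁻¹*x5⁻¹ + x1⁻¹*x2⁻¹*x6⁻¹ + x1⁻¹*x3⁻¹*x4⁻¹ + x1⁻¹*x3⁻¹*x5⁻¹ + x1⁻¹*x3⁻¹*x6⁻¹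 + x1⁻¹*x4⁻¹*x5⁻¹ + x1⁻¹*x4⁻¹*x6⁻¹ + x1⁻¹*x5⁻¹*x6⁻¹ + x2⁻¹*x3⁻¹*x4⁻¹ + x2⁻¹*x3⁻¹*x5⁻¹ + x2⁻¹*x3⁻¹*x6⁻¹ + x2⁻¹*x4⁻¹*x5⁻¹ + x2⁻¹*x4⁻¹*x6⁻¹ + x2⁻¹*x5⁻¹*x6⁻¹ + x3⁻¹*x4⁻¹*x5⁻¹ + x3⁻¹*x4⁻¹*x6⁻¹ + x3⁻¹*x5⁻¹*x6⁻¹ + x4⁻¹*x5⁻¹*x6⁻¹)) * ((x1*x2*x3*x4*x5*x6) * (x1⁻¹*x2⁻¹ + x1⁻¹*x3⁻¹ + x1⁻¹*x4⁻¹ + x1⁻¹*x5⁻¹ + x1⁻¹*x6⁻¹ + x2⁻¹*x3⁻¹ + x2⁻¹*x4⁻¹ + x2⁻¹*x5⁻¹ + x2⁻¹*x6⁻¹ + x3⁻¹*x4⁻¹ + x3⁻¹*x5⁻¹ + x3⁻¹*x6⁻¹ + x4⁻¹*x5⁻¹ + x4⁻¹*x6⁻¹ + x5⁻¹*x6⁻¹))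 := by rw [u2, u3]
        _ = (x1*x2*x3*x4*x5*x6) * ((x1*x2*x3*x4*x5*x6) * ((x1⁻¹*x2⁻¹ + x1⁻¹*x3⁻¹ + x1⁻¹*x4⁻¹ + x1⁻¹*x5⁻¹ + x1⁻¹*x6⁻¹ + x2⁻¹*x3⁻¹ + x2⁻¹*x4⁻¹ + x2⁻¹*x5⁻¹ + x2⁻¹*x6⁻¹ + x3⁻¹*x4⁻¹ + x3⁻¹*x5⁻¹ + x3⁻¹*x6⁻¹ + x4⁻¹*x5⁻¹ + x4⁻¹*x6⁻¹ + x5⁻¹*x6⁻¹) * (x1⁻¹*x2⁻¹*x3⁻¹ + x1⁻¹*x2⁻¹*x4⁻¹ + x1⁻¹*x2⁻¹*x5⁻¹ + x1⁻¹*x2⁻¹*x6⁻¹ + x1⁻¹*x3⁻¹*x4⁻¹ + x1⁻¹*x3⁻¹*x5⁻¹ + x1⁻¹*x3⁻¹*x6⁻¹ + x1⁻¹*x4⁻¹*x5⁻¹ + x1⁻¹*x4⁻¹*x6⁻¹ + x1⁻¹*x5⁻¹*x6⁻¹ + x2⁻¹*x3⁻¹*x4⁻¹ + x2⁻¹*x3⁻¹*x5⁻¹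 + x2⁻¹*x3⁻¹*x6⁻¹ + x2⁻¹*x4⁻¹*x5⁻¹ + x2⁻¹*x4⁻¹*x6⁻¹ + x2⁻¹*x5⁻¹*x6⁻¹ + x3⁻¹*x4⁻¹*x5⁻¹ + x3⁻¹*x4⁻¹*x6⁻¹ + x3⁻¹*x5⁻¹*x6⁻¹ + x4⁻¹*x5⁻¹*x6⁻¹))) := by ring
        _ = (x1*x2*x3*x4*x5*x6) * ((x1*x2*x3*x4*x5*x6) * (x1⁻¹*x2⁻¹*x3⁻¹*x4⁻¹*x5⁻¹ + x1⁻¹*x2⁻¹*x3⁻¹*x4⁻¹*x6⁻¹ + x1⁻¹*x2⁻¹*x3⁻¹*x5⁻¹*x6⁻¹ + x1⁻¹*x2⁻¹*x4⁻¹*x5⁻¹*x6⁻¹ + x1⁻¹*x3⁻¹*x4⁻¹*x5⁻¹*x6⁻¹ + x2⁻¹*x3⁻¹*x4⁻¹*x5⁻¹*x6⁻¹)) := by rw [← key2]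
        _ = (x1*x2*x3*x4*x5*x6) * (x1 + x2 + x3 + x4 + x5 + x6) := by rw [u5]
        _ = 0 := by rw [hs6, mul_zero]
    by_cases h3 : (x1*x2*x3 + x1*x2*x4 + x1*x2*x5 + x1*x2*x6 + x1*x3*x4 + x1*x3*x5 + x1*x3*x6 + x1*x4*x5 + x1*x4*x6 + x1*x5*x6 + x2*x3*x4 + x2*x3*x5 + x2*x3*x6 + x2*x4*x5 + x2*x4*x6 + x2*x5*x6 + x3*x4*x5 + x3*x4*x6 + x3*x5*x6 + x4*x5*x6) = 0
    · exact case6a h2 x1 x2 x3 x4 x5 x6 d12 d13 d14 d23 d24 d34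
        (by linear_combination H1) h3 heW
    · have hE2 : (x1*x2 + x1*x3 + x1*x4 + x1*x5 + x1*x6 + x2*x3 + x2*x4 + x2*x5 + x2*x6 + x3*x4 + x3*x5 + x3*x6 + x4*x5 + x4*x6 + x5*x6) = 0 := (mul_eq_zero.mp hE23).resolve_right h3
      have hE4 : (x1*x2*x3*x4 + x1*x2*x3*x5 + x1*x2*x3*x6 + x1*x2*x4*x5 + x1*x2*x4*x6 + x1*x2*x5*x6 + x1*x3*x4*x5 + x1*x3*x4*x6 + x1*x3*x5*x6 + x1*x4*x5*x6 + x2*x3*x4*x5 + x2*x3*x4*x6 + x2*x3*x5*x6 + x2*x4*x5*x6 + x3*x4*x5*x6) = 0 := (mul_eq_zero.mp hE34).resolve_left h3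
      exact case6b h2 x1 x2 x3 x4 x5 x6 cne12 cne13 cne23
        (by linear_combination H1) hE2 hE4 heW

/-- Second class of binary reversible cyclic codes (Table I): if
`gcd(n, 3) = 1` and the binary codeword `c` vanishes at `α^i` for
`i ∈ {−5, −1, 1, 5}`, then `wt(c) ≥ 7`. -/
theorem binary_reversible_class_two
    (E : Type*) [Field E] [Algebra (ZMod 2) E]
    (n : ℕ) (hn : 0 < n) (hn3 : Nat.gcd n 3 = 1)
    (α : E) (hα : orderOf α = n)
    (c : Polynomial (ZMod 2)) (hc : c ≠ 0) (hcdeg : c.natDegree < n)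
    (hzero : ∀ i ∈ ({-5, -1, 1, 5} : Finset ℤ),
      (c.map (algebraMap (ZMod 2) E)).eval (α ^ i) = 0) :
    7 ≤ c.support.card := by
  have h2 : (2:E) = 0 := by
    calc (2:E) = algebraMap (ZMod 2) E 2 := (map_ofNat _ 2).symm
      _ = algebraMap (ZMod 2) E 0 := congrArg _ (by decide)
      _ = 0 := map_zero _
  have hev : ∀ t : E, (c.map (algebraMap (ZMod 2) E)).eval t = ∑ a ∈ c.support, t ^ a := by
    intro t
    rw [Polynomial.eval_map, Polynomial.eval₂_eq_sum, Polynomial.sum_def]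
    refine Finset.sum_congr rfl fun a ha => ?_
    have h1 : c.coeff a = 1 := by
      have h0 := Polynomial.mem_support_iff.mp ha
      revert h0
      generalize c.coeff a = u
      revert u
      decide
    rw [h1, map_one, one_mul]
  have E1 := hzero 1 (by decide)
  rw [zpow_one, hev] at E1
  have E5 := hzero 5 (by decide)
  rw [show ((5:ℤ)) = ((5:ℕ):ℤ) by norm_num, zpow_natCast, hev] at E5
  have H5 : ∑ a ∈ c.support, (α ^ a)^5 = 0 := by
    rw [← E5]
    exact Finset.sum_congr rfl fun a _ => (pow_right_comm α a 5)
  have Em1 := hzero (-1) (by decide)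
  rw [show ((-1:ℤ)) = -((1:ℕ):ℤ) by norm_num, zpow_neg, zpow_natCast, pow_one, hev] at Em1
  have G1 : ∑ a ∈ c.support, (α ^ a)⁻¹ = 0 := by
    rw [← Em1]
    exact Finset.sum_congr rfl fun a _ => (inv_pow α a).symm
  have Em5 := hzero (-5) (by decide)
  rw [show ((-5:ℤ)) = -((5:ℕ):ℤ) by norm_num, zpow_neg, zpow_natCast, hev] at Em5
  have G5 : ∑ a ∈ c.support, ((α ^ a)⁻¹)^5 = 0 := by
    rw [← Em5]
    refine Finset.sum_congr rfl fun a _ => ?_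
    rw [inv_pow, inv_pow, pow_right_comm]
  exact key_lemma h2 hn hn3 hα c.support
    (fun a ha => lt_of_le_of_lt (Polynomial.le_natDegree_of_mem_supp a ha) hcdeg)
    (Polynomial.support_nonempty.mpr hc) E1 H5 G1 G5
end
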